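/- With d, δ, Δ as above (Δ = [d, δ] acting as multiplication by m on polynomials of generator-degree m), for any scalar λ we have the operator identity (d - λΔ) ∘ exp(λδ) = exp(λδ) ∘ d on each finite-dimensional graded piece of A = ℚ[x₁, x₂, ...] (where exp(λδ) is a finite sum on each element since δ raises the weighted degree). In particular, if f ∈ ker d is homogeneous of generator-degree m > 0 and λ = 1/m, then (d - 1)(exp(λδ)(f)) = 0, i.e., g := exp((1/m)δ)(f) satisfies d(g) = g. -/

import Mathlib

open MvPolynomial

/-- The derivation `d` with `d xₖ = x_{k-1}` (`x₀ = 0`); `X i` stands for `x_{i+1}`. -/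
noncomputable def dDown : Derivation ℚ (MvPolynomial ℕ ℚ) (MvPolynomial ℕ ℚ) :=
  MvPolynomial.mkDerivation ℚ (fun i => if i = 0 then 0 else X (i - 1))

/-- The derivation `δ` with `δ xₖ = k·x_{k+1}`. -/
noncomputable def dUp : Derivation ℚ (MvPolynomial ℕ ℚ) (MvPolynomial ℕ ℚ) :=
  MvPolynomial.mkDerivation ℚ (fun i => ((i : ℚ) + 1) • X (i + 1))

/-- `d` as an endomorphism. -/
noncomputable def D : Module.End ℚ (MvPolynomial ℕ ℚ) := dDown.toLinearMap

/-- `δ` as an endomorphism. -/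
noncomputable def Δ' : Module.End ℚ (MvPolynomial ℕ ℚ) := dUp.toLinearMap

/-- The Euler commutator `Δ = dδ - δd`. -/
noncomputable def Euler : Module.End ℚ (MvPolynomial ℕ ℚ) := D * Δ' - Δ' * D

lemma dDown_X (i : ℕ) : dDown (X i) = if i = 0 then 0 else X (i - 1) :=
  mkDerivation_X _ _ _

lemma dUp_X (i : ℕ) : dUp (X i) = ((i : ℚ) + 1) • X (i + 1) :=
  mkDerivation_X _ _ _

noncomputable def E : Derivation ℚ (MvPolynomial ℕ ℚ) (MvPolynomial ℕ ℚ) := ⁅dDown, dUp⁆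

lemma E_X (i : ℕ) : E (X i) = X i := by
  rcases Nat.eq_zero_or_pos i with h | h
  · subst h
    simp [E, Derivation.commutator_apply, dUp_X, dDown_X]
  · have hi : i ≠ 0 := h.ne'
    have h1 : dDown (X (i + 1)) = X i := by simp [dDown_X]
    have h2 : dUp (X (i - 1)) = (i : ℚ) • X i := by
      rw [dUp_X, Nat.sub_add_cancel h]
      congr 1
      push_cast [Nat.cast_sub h]
      ring
    simp only [E, Derivation.commutator_apply, dUp_X, dDown_X, if_neg hi, Derivation.map_smul,
      h1, h2]
    rw [← sub_smul]
    norm_num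

lemma Euler_eq : Euler = E.toLinearMap := rfl

lemma E_comm_dUp : Euler * Δ' = Δ' * Euler := by
  have h : (⁅E, dUp⁆ : Derivation ℚ (MvPolynomial ℕ ℚ) (MvPolynomial ℕ ℚ)) = 0 := by
    apply MvPolynomial.derivation_ext
    intro i
    simp [Derivation.commutator_apply, E_X, dUp_X, Derivation.map_smul]
  apply LinearMap.ext
  intro g
  have h2 : E (dUp g) - dUp (E g) = 0 := by
    rw [← Derivation.commutator_apply, h, Derivation.zero_apply]
  simp only [Module.End.mul_apply, Euler_eq, Δ']
  rw [sub_eq_zero] at h2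
  exact h2

lemma E_homog {f : MvPolynomial ℕ ℚ} {m : ℕ} (hf : f.IsHomogeneous m) :
    E f = (m : ℚ) • f := by
  have hE : E = MvPolynomial.mkDerivation ℚ (fun i => X i) := by
    apply MvPolynomial.derivation_ext
    intro i; simp [E_X]
  have hmono : ∀ (s : ℕ →₀ ℕ) (r : ℚ),
      E (monomial s r) = (s.degree : ℚ) • monomial s r := by
    intro s r
    rw [hE, mkDerivation_monomial]
    have key : (s.sum fun i k => monomial (s - Finsupp.single i 1) (k : ℚ) • X i)
        = (s.degree : ℚ) • monomial s (1 : ℚ) := by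
      rw [Finsupp.sum, Finsupp.degree]
      rw [Finset.sum_congr rfl (g := fun i => (s i : ℚ) • monomial s (1 : ℚ)) ?_]
      · rw [← Finset.sum_smul]
        change _ = ((∑ i ∈ s.support, s i : ℕ) : ℚ) • _
        push_cast
        ring_nf
      · intro i hi
        have h1 : Finsupp.single i 1 ≤ s := by
          rw [Finsupp.single_le_iff]
          exact Nat.one_le_iff_ne_zero.mpr (Finsupp.mem_support_iff.mp hi)
        have h2 : (s - Finsupp.single i 1) + Finsupp.single i 1 = s := tsub_add_cancel_of_le h1
        rw [smul_eq_mul, X, monomial_mul, h2]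
        simp [smul_monomial]
    rw [key, smul_comm, smul_monomial, smul_eq_mul, mul_one]
  conv_lhs => rw [f.as_sum]
  rw [map_sum]
  rw [Finset.sum_congr rfl (g := fun s => (m : ℚ) • monomial s (coeff s f)) ?_]
  · rw [← Finset.smul_sum, ← f.as_sum]
  · intro s hs
    rw [hmono]
    have hd : s.degree = m := by
      have := hf (Finsupp.mem_support_iff.mp hs)
      rw [Finsupp.degree_eq_weight_one, ← Pi.one_def]; exact this
    rw [hd]

lemma comm_pow (n : ℕ) : Euler * Δ' ^ n = Δ' ^ n * Euler :=
  Commute.pow_right (E_comm_dUp : Commute Euler Δ') n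

lemma part1 : ∀ n : ℕ, 1 ≤ n → D * Δ' ^ n - Δ' ^ n * D = (n : ℚ) • (Euler * Δ' ^ (n - 1)) := by
  intro n hn
  induction n, hn using Nat.le_induction with
  | base => simp [Euler]
  | succ n hn ih =>
    have hstep : D * Δ' ^ (n + 1) - Δ' ^ (n + 1) * D
        = (D * Δ' ^ n - Δ' ^ n * D) * Δ' + Δ' ^ n * (D * Δ' - Δ' * D) := by
      rw [pow_succ]
      simp only [mul_sub, sub_mul, mul_assoc]
      abel
    rw [hstep, ih]
    have hpow : Δ' ^ (n - 1) * Δ' = Δ' ^ n := by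
      conv_rhs => rw [← Nat.sub_add_cancel hn]
      rw [pow_succ]
    have : (Euler : Module.End ℚ (MvPolynomial ℕ ℚ)) = D * Δ' - Δ' * D := rfl
    rw [smul_mul_assoc, mul_assoc, hpow, ← this, ← comm_pow, Nat.add_sub_cancel]
    push_cast
    rw [add_smul, one_smul]

/-- The operator identity `[d, δⁿ] = n Δ δ^{n-1}` for `n ≥ 1`; consequently, if
`f ∈ ker d` is homogeneous of generator-degree `m > 0` and `gₖ = (mᵏ k!)⁻¹ δᵏ f`
are the terms of `exp((1/m)δ)(f)`, then `d gₖ = g_{k-1}` for `k ≥ 1`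
(i.e. `(d - 1)(exp((1/m)δ)(f)) = 0` degree-by-degree). -/
theorem stmt_17 :
    (∀ n : ℕ, 1 ≤ n → D * Δ' ^ n - Δ' ^ n * D = (n : ℚ) • (Euler * Δ' ^ (n - 1))) ∧
    (∀ (m : ℕ) (f : MvPolynomial ℕ ℚ), 0 < m → f.IsHomogeneous m → dDown f = 0 →
      ∀ k : ℕ, 1 ≤ k →
        dDown ((((m : ℚ) ^ k * k.factorial)⁻¹) • (Δ' ^ k) f)
          = (((m : ℚ) ^ (k - 1) * (k - 1).factorial)⁻¹) • (Δ' ^ (k - 1)) f) := by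
  refine ⟨part1, ?_⟩
  intro m f hm hf hd k hk
  have hEf : ∀ j : ℕ, Euler ((Δ' ^ j) f) = (m : ℚ) • (Δ' ^ j) f := by
    intro j
    have h1 : (Euler * Δ' ^ j) f = (Δ' ^ j * Euler) f := by rw [comm_pow]
    simp only [Module.End.mul_apply] at h1
    have h2 : Euler f = (m : ℚ) • f := by
      rw [Euler_eq]; exact E_homog hf
    show Euler ((Δ' ^ j) f) = _
    rw [show Euler ((Δ' ^ j) f) = (Δ' ^ j) (Euler f) from h1, h2, map_smul]
  have hDf : D f = 0 := hd
  have hkey : D ((Δ' ^ k) f) = ((k : ℚ) * m) • (Δ' ^ (k - 1)) f := by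
    have := congrArg (fun T : Module.End ℚ (MvPolynomial ℕ ℚ) => T f) (part1 k hk)
    simp only [LinearMap.sub_apply, Module.End.mul_apply, LinearMap.smul_apply, hDf,
      map_zero, sub_zero] at this
    rw [this, hEf, smul_smul]
  have hL : dDown ((((m : ℚ) ^ k * k.factorial)⁻¹) • (Δ' ^ k) f)
      = (((m : ℚ) ^ k * k.factorial)⁻¹ * ((k : ℚ) * m)) • (Δ' ^ (k - 1)) f := by
    rw [Derivation.map_smul]
    show (((m : ℚ) ^ k * k.factorial)⁻¹) • D ((Δ' ^ k) f) = _
    rw [hkey, smul_smul]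
  rw [hL]
  congr 1
  have hm0 : (m : ℚ) ≠ 0 := Nat.cast_ne_zero.mpr hm.ne'
  have hk0 : (k : ℚ) ≠ 0 := Nat.cast_ne_zero.mpr (Nat.one_le_iff_ne_zero.mp hk)
  have hfac : ((k - 1).factorial : ℚ) ≠ 0 := Nat.cast_ne_zero.mpr (Nat.factorial_ne_zero _)
  have hfacs : (k.factorial : ℚ) = (k : ℚ) * ((k - 1).factorial : ℚ) := by
    exact_mod_cast (Nat.mul_factorial_pred (Nat.one_le_iff_ne_zero.mp hk)).symm
  have hpows : (m : ℚ) ^ k = (m : ℚ) ^ (k - 1) * m := by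
    conv_lhs => rw [← Nat.sub_add_cancel hk, pow_succ]
  rw [hfacs, hpows]
  field_simp
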